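/- If a truth assignment σ satisfies all clauses of a 3-SAT instance, then in the associated reduction graph there is a path from s to t with pairwise distinct edge labels: for each variable x_j take the branch corresponding to the polarity NOT chosen by σ (i.e., if σ(x_j) = true, take the branch labeled with negative literals ¬x_j; if false, take the positive branch), and for each clause take an edge labeled by a literal made true by σ. -/

import Mathlib

structure LabeledGraph (V E L : Type) where
  src : E → V
  tgt : E → V
  lab : E → L

variable {V E L : Type}

def IsWalk (G : LabeledGraph V E L) : V → V → List E → Prop
  | s, t, [] => s = t
  | s, t, e :: es => G.src e = s ∧ IsWalk G (G.tgt e) t es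

def Feasible (G : LabeledGraph V E L) (p : List E) : Prop :=
  (p.map G.lab).Nodup

/-! ## The 3-SAT to SPUL reduction graph

A 3-SAT instance with `n` variables and `m` clauses is given by
`C : Fin m → Fin 3 → Fin n × Bool`, where `C i k = (j, b)` means the `k`-th
literal of clause `C_i` is variable `x_j` with polarity `b`
(`b = true` : positive literal `x_j`; `b = false` : negated literal `¬x_j`). -/

/-- The list of occurrences (clause index, position) of the literal `(j, b)`. -/
def occList {n m : ℕ} (C : Fin m → Fin 3 → Fin n × Bool) (j : Fin n) (b : Bool) :
    List (Fin m × Fin 3) :=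
  ((List.finRange m) ×ˢ (List.finRange 3)).filter (fun q => C q.1 q.2 = (j, b))

/-- Number of edges of the branch of the variable gadget for `x_j` carrying
polarity `b`: one edge per occurrence of the literal `(j, b)` in the clauses,
or a single (dummy-labeled) edge if the literal does not occur. -/
def branchLen {n m : ℕ} (C : Fin m → Fin 3 → Fin n × Bool) (j : Fin n) (b : Bool) : ℕ :=
  max 1 (occList C j b).length

/-- Vertices of the reduction graph: the junction vertices
`s = u_0, u_1, …, u_n = w_0, w_1, …, w_m = t` (as `Fin (n+m+1)`, where `u_j` is
junction `j` and `w_i` is junction `n + i`), together with internal vertices of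
the variable-gadget branches. -/
abbrev RedV {n m : ℕ} (C : Fin m → Fin 3 → Fin n × Bool) : Type :=
  Fin (n + m + 1) ⊕ (Σ j : Fin n, Σ b : Bool, Fin (branchLen C j b))

/-- Edges of the reduction graph: `inl ⟨j, b, r⟩` is the `r`-th edge of the
branch of variable gadget `x_j` with polarity `b`; `inr (i, k)` is the clause
edge for the `k`-th literal of clause `C_i`. -/
abbrev RedE {n m : ℕ} (C : Fin m → Fin 3 → Fin n × Bool) : Type :=
  (Σ j : Fin n, Σ b : Bool, Fin (branchLen C j b)) ⊕ (Fin m × Fin 3)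

/-- Labels: `inl (i, k)` identifies the occurrence of a literal at position `k`
of clause `C_i` (this label appears both on the corresponding variable-branch
edge and on the corresponding clause edge); `inr (j, b)` is the dummy label for
the branch of a literal occurring in no clause. -/
abbrev RedL (n m : ℕ) : Type := (Fin m × Fin 3) ⊕ (Fin n × Bool)

/-- The reduction graph: in series, for each variable `x_j` two parallel
branches from `u_{j-1}` to `u_j` (the branch of polarity `b` being a directed
path whose edges carry the labels of the occurrences of literal `(j, b)`),
followed by, for each clause `C_i`, three parallel edges from `w_{i-1}` to
`w_i` labeled by the three literal occurrences of `C_i`. -/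
def redGraph (n m : ℕ) (C : Fin m → Fin 3 → Fin n × Bool) :
    LabeledGraph (RedV C) (RedE C) (RedL n m) where
  src e :=
    match e with
    | Sum.inl ⟨j, b, r⟩ =>
        if r.val = 0 then Sum.inl ⟨j.val, by have := j.isLt; omega⟩
        else Sum.inr ⟨j, b, ⟨r.val - 1, by have := r.isLt; omega⟩⟩
    | Sum.inr (i, _) => Sum.inl ⟨n + i.val, by have := i.isLt; omega⟩
  tgt e :=
    match e with
    | Sum.inl ⟨j, b, r⟩ =>
        if r.val = branchLen C j b - 1 then Sum.inl ⟨j.val + 1, by have := j.isLt; omega⟩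
        else Sum.inr ⟨j, b, r⟩
    | Sum.inr (i, _) => Sum.inl ⟨n + i.val + 1, by have := i.isLt; omega⟩
  lab e :=
    match e with
    | Sum.inl ⟨j, b, r⟩ =>
        if h : occList C j b = [] then Sum.inr (j, b)
        else Sum.inl ((occList C j b).getD r.val ((occList C j b).head h))
    | Sum.inr q => Sum.inl q

/-- Start vertex `s = u_0`. -/
def redS (n m : ℕ) (C : Fin m → Fin 3 → Fin n × Bool) : RedV C :=
  Sum.inl ⟨0, by omega⟩

/-- Target vertex `t = w_m`. -/
def redT (n m : ℕ) (C : Fin m → Fin 3 → Fin n × Bool) : RedV C :=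
  Sum.inl ⟨n + m, by omega⟩

-- auxiliary lemmas

lemma isWalk_append {G : LabeledGraph V E L} {s v t : V} {p q : List E}
    (hp : IsWalk G s v p) (hq : IsWalk G v t q) : IsWalk G s t (p ++ q) := by
  induction p generalizing s with
  | nil => cases hp; simpa using hq
  | cons e es ih => exact ⟨hp.1, ih hp.2⟩

section Red
variable {n m : ℕ} (C : Fin m → Fin 3 → Fin n × Bool)


lemma mem_occList {j : Fin n} {b : Bool} {q : Fin m × Fin 3} :
    q ∈ occList C j b ↔ C q.1 q.2 = (j, b) := by
  simp only [occList, List.mem_filter, decide_eq_true_eq, and_iff_right_iff_imp]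
  exact fun _ => List.mem_product.mpr ⟨List.mem_finRange _, List.mem_finRange _⟩

lemma occList_nodup (j : Fin n) (b : Bool) : (occList C j b).Nodup :=
  (((List.nodup_finRange m).product (List.nodup_finRange 3))).filter _

lemma occList_length_pos {j : Fin n} {b : Bool} (h : occList C j b ≠ []) :
    branchLen C j b = (occList C j b).length := by
  have := List.length_pos_iff.mpr h
  simp [branchLen]; omega

def branchPath (j : Fin n) (b : Bool) : List (RedE C) :=
  (List.finRange (branchLen C j b)).map (fun r => Sum.inl ⟨j, b, r⟩)

lemma branch_walk_aux (j : Fin n) (b : Bool) :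
    ∀ k a (ha : a < branchLen C j b), branchLen C j b - a = k →
    IsWalk (redGraph n m C)
      ((redGraph n m C).src (Sum.inl ⟨j, b, ⟨a, ha⟩⟩))
      (Sum.inl ⟨j.val + 1, by have := j.isLt; omega⟩)
      (((List.finRange (branchLen C j b)).drop a).map (fun r => Sum.inl ⟨j, b, r⟩)) := by
  intro k
  induction k with
  | zero => intro a ha h; omega
  | succ k ih =>
    intro a ha h
    have hlen : a < (List.finRange (branchLen C j b)).length := by simpa using ha
    rw [List.drop_eq_getElem_cons hlen]
    simp only [List.getElem_finRange, List.map_cons, Fin.cast_mk]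
    refine ⟨rfl, ?_⟩
    by_cases hend : a = branchLen C j b - 1
    · have : (List.finRange (branchLen C j b)).drop (a + 1) = [] := by
        apply List.drop_eq_nil_of_le; simp; omega
      rw [this]
      show (redGraph n m C).tgt _ = _
      simp only [redGraph, hend]
      simp
    · have ha1 : a + 1 < branchLen C j b := by omega
      have := ih (a + 1) ha1 (by omega)
      have hsrc : (redGraph n m C).src (Sum.inl ⟨j, b, ⟨a + 1, ha1⟩⟩)
          = (redGraph n m C).tgt (Sum.inl ⟨j, b, ⟨a, ha⟩⟩) := by
        simp only [redGraph]
        rw [if_neg (by omega), if_neg (by omega)]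
        rfl
      rwa [hsrc] at this

lemma branchLen_pos (j : Fin n) (b : Bool) : 0 < branchLen C j b :=
  lt_of_lt_of_le one_pos (le_max_left _ _)

lemma branch_walk (j : Fin n) (b : Bool) :
    IsWalk (redGraph n m C)
      (Sum.inl ⟨j.val, by have := j.isLt; omega⟩)
      (Sum.inl ⟨j.val + 1, by have := j.isLt; omega⟩)
      (branchPath C j b) := by
  have := branch_walk_aux C j b (branchLen C j b) 0 (branchLen_pos C j b) (by omega)
  simpa [branchPath, redGraph] using this

lemma branch_labels (j : Fin n) (b : Bool) :
    (branchPath C j b).map (redGraph n m C).lab =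
      if occList C j b = [] then [Sum.inr (j, b)] else (occList C j b).map Sum.inl := by
  split
  · next h =>
    have hl : branchLen C j b = 1 := by simp [branchLen, h]
    apply List.ext_getElem
    · simp [branchPath, hl]
    · intro i h1 h2
      simp only [branchPath, List.getElem_map, List.getElem_finRange]
      show (redGraph n m C).lab _ = _
      simp [redGraph, h]
  · next h =>
    have hl : branchLen C j b = (occList C j b).length := occList_length_pos C h
    apply List.ext_getElem
    · simp [branchPath, hl]
    · intro i h1 h2
      simp only [branchPath, List.getElem_map, List.getElem_finRange]
      show (redGraph n m C).lab _ = _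
      simp only [redGraph, dif_neg h]
      simp at h2
      rw [List.getD_eq_getElem _ _ (by simpa using h2)]
      simp

lemma mem_branch_labels {x : RedL n m} {j : Fin n} {b : Bool}
    (hx : x ∈ (branchPath C j b).map (redGraph n m C).lab) :
    x = Sum.inr (j, b) ∨ ∃ q : Fin m × Fin 3, C q.1 q.2 = (j, b) ∧ x = Sum.inl q := by
  rw [branch_labels] at hx
  split at hx
  · simp at hx; left; exact hx
  · simp only [List.mem_map] at hx
    obtain ⟨q, hq, rfl⟩ := hx
    exact Or.inr ⟨q, (mem_occList C).mp hq, rfl⟩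

lemma branch_labels_nodup (j : Fin n) (b : Bool) :
    ((branchPath C j b).map (redGraph n m C).lab).Nodup := by
  rw [branch_labels]
  split
  · simp
  · exact (occList_nodup C j b).map Sum.inl_injective

def varsPath (bf : Fin n → Bool) : List (RedE C) :=
  (List.finRange n).flatMap (fun j => branchPath C j (bf j))

lemma vars_walk_aux (bf : Fin n → Bool) :
    ∀ k a (ha : a ≤ n), n - a = k →
    IsWalk (redGraph n m C) (Sum.inl ⟨a, by omega⟩) (Sum.inl ⟨n, by omega⟩)
      (((List.finRange n).drop a).flatMap (fun j => branchPath C j (bf j))) := by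
  intro k
  induction k with
  | zero =>
    intro a ha h
    have : a = n := by omega
    subst this
    rw [List.drop_eq_nil_of_le (by simp)]
    show Sum.inl _ = Sum.inl _
    rfl
  | succ k ih =>
    intro a ha h
    have ha' : a < n := by omega
    have hlen : a < (List.finRange n).length := by simpa using ha'
    rw [List.drop_eq_getElem_cons hlen, List.flatMap_cons]
    simp only [List.getElem_finRange, Fin.cast_mk]
    exact isWalk_append (branch_walk C ⟨a, ha'⟩ (bf ⟨a, ha'⟩)) (ih (a + 1) ha' (by omega))

lemma vars_walk (bf : Fin n → Bool) :
    IsWalk (redGraph n m C) (Sum.inl ⟨0, by omega⟩) (Sum.inl ⟨n, by omega⟩)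
      (varsPath C bf) :=
  vars_walk_aux C bf n 0 (by omega) (by omega)

def clausePath (kf : Fin m → Fin 3) : List (RedE C) :=
  (List.finRange m).map (fun i => Sum.inr (i, kf i))

lemma clause_walk_aux (kf : Fin m → Fin 3) :
    ∀ c a (ha : a ≤ m), m - a = c →
    IsWalk (redGraph n m C) (Sum.inl ⟨n + a, by omega⟩) (Sum.inl ⟨n + m, by omega⟩)
      (((List.finRange m).drop a).map (fun i => Sum.inr (i, kf i))) := by
  intro c
  induction c with
  | zero =>
    intro a ha h
    have : a = m := by omega
    subst this
    rw [List.drop_eq_nil_of_le (by simp)]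
    show Sum.inl _ = Sum.inl _
    rfl
  | succ c ih =>
    intro a ha h
    have ha' : a < m := by omega
    have hlen : a < (List.finRange m).length := by simpa using ha'
    rw [List.drop_eq_getElem_cons hlen, List.map_cons]
    simp only [List.getElem_finRange, Fin.cast_mk]
    exact ⟨rfl, ih (a + 1) ha' (by omega)⟩

lemma clause_walk (kf : Fin m → Fin 3) :
    IsWalk (redGraph n m C) (Sum.inl ⟨n, by omega⟩) (Sum.inl ⟨n + m, by omega⟩)
      (clausePath C kf) := by
  have := clause_walk_aux C kf m 0 (by omega) (by omega)
  simpa [clausePath] using this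

lemma varsPath_labels_nodup (bf : Fin n → Bool) :
    ((varsPath C bf).map (redGraph n m C).lab).Nodup := by
  rw [varsPath, List.map_flatMap]
  rw [List.nodup_flatMap]
  refine ⟨fun j _ => branch_labels_nodup C j (bf j), ?_⟩
  refine (List.nodup_finRange n).imp ?_
  intro j j' hne
  intro x hx hx' 
  rcases mem_branch_labels C hx with h1 | ⟨q, hq, rfl⟩ <;>
    rcases mem_branch_labels C hx' with h2 | ⟨q', hq', h2⟩
  · exact hne (by injection h1.symm.trans h2 with h; exact congrArg Prod.fst h)
  · subst h1; simp at h2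
  · simp at h2
  · injection h2 with h; subst h
    rw [hq] at hq'
    exact hne (congrArg Prod.fst hq')

end Red

/-- If the assignment `σ` satisfies every clause, then the reduction graph has
an `s`-`t` path with pairwise distinct labels which, for each variable `x_j`,
traverses the branch of the polarity NOT chosen by `σ` (if `σ x_j = true` the
negative branch, i.e. polarity `false`; if `σ x_j = false` the positive branch)
and, for each clause, uses an edge whose literal is made true by `σ`. -/
theorem satisfiable_implies_redGraph_feasible_path (n m : ℕ)
    (C : Fin m → Fin 3 → Fin n × Bool) (σ : Fin n → Bool)
    (hsat : ∀ i : Fin m, ∃ k : Fin 3, σ (C i k).1 = (C i k).2) :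
    ∃ p : List (RedE C),
      IsWalk (redGraph n m C) (redS n m C) (redT n m C) p ∧
      Feasible (redGraph n m C) p ∧
      (∀ j : Fin n, ∀ r : Fin (branchLen C j (!(σ j))), Sum.inl ⟨j, !(σ j), r⟩ ∈ p) ∧
      (∀ i : Fin m, ∃ k : Fin 3, Sum.inr (i, k) ∈ p ∧ σ (C i k).1 = (C i k).2) := by
  choose kf hk using hsat
  refine ⟨varsPath C (fun j => !(σ j)) ++ clausePath C kf, ?_, ?_, ?_, ?_⟩
  · exact isWalk_append (vars_walk C _) (clause_walk C kf)
  · unfold Feasible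
    rw [List.map_append]
    refine List.Nodup.append (varsPath_labels_nodup C _) ?_ ?_
    · rw [clausePath, List.map_map]
      exact (List.nodup_finRange m).map
        (fun a b hab => by injection hab with h; exact congrArg Prod.fst h)
    · intro x hx hx'
      rw [varsPath, List.map_flatMap, List.mem_flatMap] at hx
      obtain ⟨j, -, hxj⟩ := hx
      rw [clausePath, List.map_map, List.mem_map] at hx'
      obtain ⟨i, -, rfl⟩ := hx'
      rcases mem_branch_labels C hxj with h1 | ⟨q, hq, h2⟩
      · exact absurd h1 (by simp [redGraph])
      · have hq2 : q = (i, kf i) := by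
          have : (Sum.inl (i, kf i) : RedL n m) = Sum.inl q := h2
          injection this with h
          exact h.symm
        subst hq2
        have := hk i
        rw [hq] at this
        simp at this
  · intro j r
    apply List.mem_append_left
    rw [varsPath, List.mem_flatMap]
    exact ⟨j, List.mem_finRange j, by simp [branchPath]⟩
  · intro i
    exact ⟨kf i, List.mem_append_right _ (by simp [clausePath]), hk i⟩
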